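/- The number of partitions that are simultaneously a-core and b-core, for coprime positive integers a and b, equals (1/(a+b)) * binomial(a+b, b). -/

import Mathlib

def YoungDiagram.hookLength (d : YoungDiagram) (i j : ℕ) : ℕ :=
  (d.rowLen i - j) + (d.colLen j - i) - 1

def YoungDiagram.IsCore (d : YoungDiagram) (a : ℕ) : Prop :=
  ∀ c ∈ d.cells, d.hookLength c.1 c.2 ≠ a

namespace AB

/-- down-closed filters of a range are ranges -/
lemma down_seg (m : ℕ) (P : ℕ → Prop) [DecidablePred P]
    (hd : ∀ k, k + 1 < m → P (k+1) → P k) :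
    (Finset.range m).filter P = Finset.range (((Finset.range m).filter P).card) := by
  set A := (Finset.range m).filter P with hA
  have hsub : A ⊆ Finset.range m := Finset.filter_subset _ _
  have hdown : ∀ k ∈ A, ∀ k' ≤ k, k' ∈ A := by
    intro k hk k' hk'
    induction k with
    | zero =>
      have : k' = 0 := by omega
      exact this ▸ hk
    | succ n ih =>
      rcases Nat.eq_or_lt_of_le hk' with h | h
      · exact h ▸ hk
      · have hn : n ∈ A := by
          simp only [hA, Finset.mem_filter, Finset.mem_range] at hk ⊢
          exact ⟨by omega, hd n (by omega) hk.2⟩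
        exact ih hn (by omega)
  apply Finset.Subset.antisymm
  · intro k hk
    have h1 : Finset.range (k+1) ⊆ A := by
      intro k' hk'; exact hdown k hk k' (by simpa using Nat.lt_succ_iff.mp (Finset.mem_range.mp hk'))
    have := Finset.card_le_card h1
    simp only [Finset.card_range] at this
    exact Finset.mem_range.mpr (by omega)
  · intro k hk
    by_contra hkA
    have h2 : A ⊆ Finset.range k := by
      intro x hx
      simp only [Finset.mem_range]
      by_contra hxk
      exact hkA (hdown x hx k (by omega))
    have := Finset.card_le_card h2
    simp only [Finset.card_range] at this
    simp only [Finset.mem_range] at hk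
    omega

/-- up-closed filters of a range are top segments -/
lemma up_seg (m : ℕ) (P : ℕ → Prop) [DecidablePred P]
    (hu : ∀ k, k + 1 < m → P k → P (k+1)) :
    (Finset.range m).filter P
      = Finset.Ico (m - ((Finset.range m).filter P).card) m := by
  set A := (Finset.range m).filter P with hA
  have hsub : A ⊆ Finset.range m := Finset.filter_subset _ _
  have hup : ∀ k ∈ A, ∀ k', k ≤ k' → k' < m → k' ∈ A := by
    intro k hk k' hk' hk'm
    induction k' with
    | zero =>
      have : k = 0 := by omega
      exact this ▸ hk
    | succ n ih =>
      rcases Nat.eq_or_lt_of_le hk' with h | h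
      · exact h ▸ hk
      · have hn : n ∈ A := ih (by omega) (by omega)
        simp only [hA, Finset.mem_filter, Finset.mem_range] at hn ⊢
        exact ⟨by omega, hu n (by omega) hn.2⟩
  apply Finset.Subset.antisymm
  · intro k hk
    have hkm : k < m := Finset.mem_range.mp (hsub hk)
    have h1 : Finset.Ico k m ⊆ A := by
      intro k' hk'
      simp only [Finset.mem_Ico] at hk'
      exact hup k hk k' hk'.1 hk'.2
    have := Finset.card_le_card h1
    rw [Nat.card_Ico] at this
    exact Finset.mem_Ico.mpr ⟨by omega, hkm⟩
  · intro k hk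
    simp only [Finset.mem_Ico] at hk
    by_contra hkA
    have h2 : A ⊆ Finset.Ico (k+1) m := by
      intro x hx
      have hxm : x < m := Finset.mem_range.mp (hsub hx)
      simp only [Finset.mem_Ico]
      refine ⟨?_, hxm⟩
      by_contra hxk
      exact hkA (hup x hx k (by omega) hk.2)
    have := Finset.card_le_card h2
    rw [Nat.card_Ico] at this
    omega

section Beta

open YoungDiagram

/-- the first-column hook length of row `i` -/
def sfun (d : YoungDiagram) (i : ℕ) : ℕ := d.rowLen i + d.colLen 0 - i - 1

/-- the beta-set (set of first-column hook lengths) of a Young diagram -/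
def beta (d : YoungDiagram) : Finset ℕ :=
  (Finset.range (d.colLen 0)).image (sfun d)

lemma rowLen_pos (d : YoungDiagram) {i : ℕ} (hi : i < d.colLen 0) : 0 < d.rowLen i := by
  have : (i, 0) ∈ d := mem_iff_lt_colLen (μ := d).mpr hi
  have := mem_iff_lt_rowLen (μ := d).mp this
  omega

lemma sfun_eq (d : YoungDiagram) {i : ℕ} (hi : i < d.colLen 0) :
    sfun d i + i + 1 = d.rowLen i + d.colLen 0 := by
  have := rowLen_pos d hi
  simp only [sfun]; omega

lemma mem_beta {d : YoungDiagram} {t : ℕ} :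
    t ∈ beta d ↔ ∃ i < d.colLen 0, sfun d i = t := by
  simp [beta]

/-- chain inequality: `s` decreases by at least 1 each step -/
lemma sfun_chain (d : YoungDiagram) {k m : ℕ} (hkm : k ≤ m) (hm : m < d.colLen 0) :
    sfun d m + (m - k) ≤ sfun d k := by
  have h1 := sfun_eq d hm
  have h2 := sfun_eq d (lt_of_le_of_lt (le_refl k) (by omega : k < d.colLen 0))
  have h3 := d.rowLen_anti k m hkm
  omega

lemma hook_eq (d : YoungDiagram) {i j : ℕ} (hc : (i, j) ∈ d) :
    d.hookLength i j + (i + j + 1) = d.rowLen i + d.colLen j := by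
  have h1 := mem_iff_lt_rowLen (μ := d).mp hc
  have h2 := mem_iff_lt_colLen (μ := d).mp hc
  simp only [YoungDiagram.hookLength]; omega

/-- L1 : every hook length `h` of a cell in row `i` satisfies:
`sfun d i ≥ h` and `sfun d i - h ∉ beta d`. -/
lemma hook_beta (d : YoungDiagram) {i j : ℕ} (hc : (i, j) ∈ d) :
    ∃ s ∈ beta d, ∃ t, t + d.hookLength i j = s ∧ t ∉ beta d := by
  have hjr : j < d.rowLen i := mem_iff_lt_rowLen (μ := d).mp hc
  have hic : i < d.colLen j := mem_iff_lt_colLen (μ := d).mp hc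
  have hi0 : i < d.colLen 0 := lt_of_lt_of_le hic (d.colLen_anti 0 j (Nat.zero_le j))
  have hcj : d.colLen j ≤ d.colLen 0 := d.colLen_anti 0 j (Nat.zero_le j)
  have hh := hook_eq d hc
  have hs := sfun_eq d hi0
  refine ⟨sfun d i, mem_beta.mpr ⟨i, hi0, rfl⟩, d.colLen 0 + j - d.colLen j, by omega, ?_⟩
  rw [mem_beta]
  rintro ⟨k, hk, hsk⟩
  have hseqk := sfun_eq d hk
  -- so λ k + colLen j = j + k + 1
  by_cases hjk : j < d.rowLen k
  · -- (k, j) ∈ d, so k < colLen j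
    have : k < d.colLen j := mem_iff_lt_colLen (μ := d).mp (mem_iff_lt_rowLen (μ := d).mpr hjk)
    omega
  · -- (k, j) ∉ d, so k ≥ colLen j
    have : ¬ k < d.colLen j := fun h => hjk (mem_iff_lt_rowLen (μ := d).mp (mem_iff_lt_colLen (μ := d).mpr h))
    omega

/-- L2 : if `s ∈ beta d`, `t + h = s`, `h ≥ 1`, `t ∉ beta d`, then some cell has hook `h`. -/
lemma beta_hook (d : YoungDiagram) {s t h : ℕ} (hs : s ∈ beta d) (hth : t + h = s)
    (hh : 0 < h) (ht : t ∉ beta d) :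
    ∃ c ∈ d.cells, d.hookLength c.1 c.2 = h := by
  obtain ⟨i, hir, hsi⟩ := mem_beta.mp hs
  set r := d.colLen 0 with hr
  -- u := number of rows k < r with t < sfun d k
  set A := (Finset.range r).filter (fun k => t < sfun d k) with hAdef
  set u := A.card with hu
  have hseg : A = Finset.range u := by
    rw [hu, hAdef]
    apply down_seg
    intro k hk hPk
    have hPk' : t < sfun d (k+1) := hPk
    have := sfun_chain d (by omega : k ≤ k + 1) (by omega : k + 1 < r)
    omega
  have hmemA : ∀ k, k ∈ A ↔ (k < r ∧ t < sfun d k) := by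
    intro k; simp [hAdef]
  have hmemu : ∀ k, k < u ↔ (k < r ∧ t < sfun d k) := by
    intro k; rw [← hmemA, hseg, Finset.mem_range]
  have hiu : i < u := (hmemu i).mpr ⟨hir, by omega⟩
  have hur : u ≤ r := by
    by_contra hc
    have := (hmemu r).mp (by omega)
    omega
  have htne : ∀ k, k < r → sfun d k ≠ t := by
    intro k hk he
    exact ht (mem_beta.mpr ⟨k, hk, he⟩)
  -- basic bound : sfun d k ≥ r - k
  have hlow : ∀ k, k < r → r ≤ sfun d k + k + 1 := by
    intro k hk
    have h1 := sfun_eq d hk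
    have h2 := rowLen_pos d hk
    omega
  -- r ≤ t + u
  have hrtu : r ≤ t + u := by
    rcases Nat.lt_or_ge u r with hul | hge
    · have h1 : ¬ t < sfun d u := fun hcon => by
        have := (hmemu u).mpr ⟨hul, hcon⟩; omega
      have h2 := htne u hul
      have h3 := hlow u hul
      omega
    · omega
  set j := t + u - r with hj
  -- u ≤ h + i
  have huhi : u ≤ h + i := by
    have h1 : t < sfun d (u-1) := ((hmemu (u-1)).mp (by omega)).2
    have h2 := sfun_chain d (by omega : i ≤ u - 1) (by omega : u - 1 < r)
    omega
  have hirow : j < d.rowLen i := by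
    have := sfun_eq d hir
    omega
  have hcell : (i, j) ∈ d := mem_iff_lt_rowLen (μ := d).mpr hirow
  -- colLen j = u
  have hcol : d.colLen j = u := by
    have hforward : ∀ k, (k, j) ∈ d ↔ k < u := by
      intro k
      constructor
      · intro hkj
        have hkr : k < r := by
          have := mem_iff_lt_colLen (μ := d).mp hkj
          have := d.colLen_anti 0 j (Nat.zero_le j)
          omega
        have hjk := mem_iff_lt_rowLen (μ := d).mp hkj
        have hse := sfun_eq d hkr
        -- t + u < sfun d k + k + 1 hence t < sfun d k (else contradiction) 
        by_contra hku
        -- k ≥ u : sfun d k ≤ t - 1 - (k - u)... 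
        have h1 : ¬ t < sfun d k := fun hcon => by
          have := (hmemu k).mpr ⟨hkr, hcon⟩; omega
        have h2 := htne k hkr
        rcases Nat.eq_or_lt_of_le (by omega : u ≤ k) with he | hl
        · omega
        · have h3 : ¬ t < sfun d u := fun hcon => by
            have := (hmemu u).mpr ⟨by omega, hcon⟩; omega
          have h4 := htne u (by omega)
          have h5 := sfun_chain d (by omega : u ≤ k) hkr
          omega
      · intro hku
        have hkr : k < r := by omega
        have h1 : t < sfun d (u-1) := ((hmemu (u-1)).mp (by omega)).2
        have h2 := sfun_chain d (by omega : k ≤ u - 1) (by omega : u - 1 < r)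
        have hse := sfun_eq d hkr
        exact mem_iff_lt_rowLen (μ := d).mpr (by omega)
    have h1 : u ≤ d.colLen j := by
      rcases Nat.eq_zero_or_pos u with h0 | h0
      · omega
      · have := (mem_iff_lt_colLen (μ := d)).mp ((hforward (u-1)).mpr (by omega))
        omega
    rcases Nat.eq_or_lt_of_le h1 with he | hl
    · omega
    · have := (hforward u).mp (mem_iff_lt_colLen (μ := d).mpr hl)
      omega
  refine ⟨(i, j), (YoungDiagram.mem_cells _).mpr hcell, ?_⟩
  show d.hookLength i j = h
  have := hook_eq d hcell
  have := sfun_eq d hir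
  omega

/-- the property of a beta-set corresponding to being an `a`-core -/
def Closed (S : Finset ℕ) (a : ℕ) : Prop := ∀ s ∈ S, a ≤ s → s - a ∈ S

lemma isCore_iff_closed (d : YoungDiagram) {a : ℕ} (ha : 0 < a) :
    d.IsCore a ↔ Closed (beta d) a := by
  constructor
  · intro hcore s hsmem has
    by_contra hsa
    obtain ⟨c, hc, hch⟩ := beta_hook d hsmem (by omega : (s - a) + a = s) ha hsa
    exact hcore c hc hch
  · intro hcl c hc hch
    obtain ⟨i, j⟩ := c
    have hcd : (i, j) ∈ d := by simpa using hc
    obtain ⟨s, hsmem, t, hts, htn⟩ := hook_beta d hcd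
    simp only at hch
    rw [hch] at hts
    have h1 := hcl s hsmem (by omega)
    have h2 : t = s - a := by omega
    exact htn (h2 ▸ h1)

lemma beta_injective : Function.Injective beta := by
  intro d e hde
  -- first : colLen 0 equal (cardinalities)
  have hcard : ∀ f : YoungDiagram, (beta f).card = f.colLen 0 := by
    intro f
    rw [beta, Finset.card_image_of_injOn, Finset.card_range]
    intro x hx y hy hxy
    simp only [Finset.mem_coe, Finset.mem_range] at hx hy
    by_contra hne
    rcases Nat.lt_or_ge x y with hl | hg
    · have := sfun_chain f (le_of_lt hl) hy; omega
    · have := sfun_chain f (by omega : y ≤ x) hx; omega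
  have hc0 : d.colLen 0 = e.colLen 0 := by
    rw [← hcard d, ← hcard e, hde]
  -- show sfun agree by strong downward ... show rowLen equal for all i
  have hrow : ∀ i, d.rowLen i = e.rowLen i := by
    -- sfun d i determined as the unique element with exactly i larger elements? 
    -- use : sfun d i = (i-th largest) . Instead show : ∀ i < colLen, sfun d i = sfun e i by induction? 
    -- sfun d strictly decreasing, beta = image; i-th largest element equal.
    have hmono : ∀ (f : YoungDiagram), StrictMonoOn (fun i => sfun f (f.colLen 0 - 1 - i)) (Set.Iio (f.colLen 0)) := by
      intro f x hx y hy hxy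
      simp only [Set.mem_Iio] at hx hy
      have := sfun_chain f (by omega : f.colLen 0 - 1 - y ≤ f.colLen 0 - 1 - x) (by omega : f.colLen 0 - 1 - x < f.colLen 0)
      simp only
      omega
    intro i
    rcases Nat.lt_or_ge i (d.colLen 0) with hi | hi
    · -- both sides positive rows; use sorted lists
      have hie : i < e.colLen 0 := by omega
      -- the i-th largest of beta d equals sfun d i ; since beta d = beta e, sfun d i = sfun e i
      have key : sfun d i = sfun e i := by
        -- count elements greater than sfun f i in beta f is i
        have hcnt : ∀ f : YoungDiagram, ∀ j < f.colLen 0,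
            ((beta f).filter (fun t => sfun f j < t)).card = j := by
          intro f j hj
          have : (beta f).filter (fun t => sfun f j < t)
              = (Finset.range j).image (sfun f) := by
            apply Finset.Subset.antisymm
            · intro t htm
              simp only [Finset.mem_filter, mem_beta] at htm
              obtain ⟨⟨k, hk, hkt⟩, hgt⟩ := htm
              simp only [Finset.mem_image, Finset.mem_range]
              refine ⟨k, ?_, hkt⟩
              by_contra hkj
              have := sfun_chain f (by omega : j ≤ k) hk
              omega
            · intro t htm
              simp only [Finset.mem_image, Finset.mem_range] at htm
              obtain ⟨k, hk, hkt⟩ := htm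
              simp only [Finset.mem_filter, mem_beta]
              have := sfun_chain f (by omega : k ≤ j) hj
              exact ⟨⟨k, by omega, hkt⟩, by omega⟩
          rw [this, Finset.card_image_of_injOn, Finset.card_range]
          intro x hx y hy hxy
          simp only [Finset.mem_coe, Finset.mem_range] at hx hy
          by_contra hne
          rcases Nat.lt_or_ge x y with hl | hg
          · have := sfun_chain f (le_of_lt hl) (by omega : y < f.colLen 0); omega
          · have := sfun_chain f (by omega : y ≤ x) (by omega : x < f.colLen 0); omega
        -- sfun d i ∈ beta e with i greater elements; sfun e i also; uniqueness
        have h1 : sfun d i ∈ beta e := by rw [← hde]; exact mem_beta.mpr ⟨i, hi, rfl⟩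
        obtain ⟨k, hk, hks⟩ := mem_beta.mp h1
        have h2 := hcnt e k hk
        have h3 := hcnt d i hi
        rw [hde] at h3
        have h4 := hcnt e i hie
        -- h2 vs h3 : counts of elements greater than sfun e k in beta e is k and i
        rw [hks] at h2
        have hki : k = i := by rw [← h2, h3]
        rw [← hks, hki]
      have h1 := sfun_eq d hi
      have h2 := sfun_eq e hie
      omega
    · -- both zero
      have h1 : ¬ (i, 0) ∈ d := fun h => by have := mem_iff_lt_colLen (μ := d).mp h; omega
      have h2 : ¬ (i, 0) ∈ e := fun h => by have := mem_iff_lt_colLen (μ := e).mp h; omega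
      rw [mem_iff_lt_rowLen (μ := d)] at h1
      rw [mem_iff_lt_rowLen (μ := e)] at h2
      omega
  ext ⟨i, j⟩
  simp only [YoungDiagram.mem_cells, mem_iff_lt_rowLen (μ := d), mem_iff_lt_rowLen (μ := e), hrow]

end Beta
section Construct

open YoungDiagram

variable (S : Finset ℕ)

/-- the `i`-th largest element of `S` -/
def sfS (i : ℕ) : ℕ := (S.sort (· ≤ ·)).getD (S.card - 1 - i) 0

lemma sfS_chain {p q : ℕ} (hpq : p ≤ q) (hq : q < S.card) :
    sfS S q + (q - p) ≤ sfS S p := by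
  induction q with
  | zero =>
    have : p = 0 := by omega
    simp [this]
  | succ n ih =>
    rcases Nat.eq_or_lt_of_le hpq with h | h
    · simp [h]
    · have step : sfS S (n+1) + 1 ≤ sfS S n := by
        have hlen : (S.sort (· ≤ ·)).length = S.card := S.length_sort _
        have hsort : (S.sort (· ≤ ·)).Pairwise (· < ·) :=
          ((S.pairwise_sort (· ≤ ·)).and (S.sort_nodup (· ≤ ·))).imp (fun h => lt_of_le_of_ne h.1 h.2)
        have hidx1 : S.card - 1 - (n+1) < (S.sort (· ≤ ·)).length := by omega
        have hidx2 : S.card - 1 - n < (S.sort (· ≤ ·)).length := by omega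
        have := List.Pairwise.rel_get_of_lt hsort
          (a := ⟨S.card - 1 - (n+1), hidx1⟩) (b := ⟨S.card - 1 - n, hidx2⟩) (by simp; omega)
        simp only [sfS]
        rw [List.getD_eq_getElem _ _ hidx1, List.getD_eq_getElem _ _ hidx2]
        simpa [List.get_eq_getElem] using this
      have := ih (by omega) (by omega)
      omega

lemma sfS_mem {i : ℕ} (hi : i < S.card) : sfS S i ∈ S := by
  have hlen : (S.sort (· ≤ ·)).length = S.card := S.length_sort _
  have hidx : S.card - 1 - i < (S.sort (· ≤ ·)).length := by omega
  rw [sfS, List.getD_eq_getElem _ _ hidx]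
  rw [← Finset.mem_sort (α := ℕ) (· ≤ ·)]
  exact List.getElem_mem _

lemma sfS_surj {t : ℕ} (ht : t ∈ S) : ∃ i < S.card, sfS S i = t := by
  have hlen : (S.sort (· ≤ ·)).length = S.card := S.length_sort _
  rw [← Finset.mem_sort (α := ℕ) (· ≤ ·)] at ht
  obtain ⟨⟨m, hm⟩, hmt⟩ := List.mem_iff_get.mp ht
  refine ⟨S.card - 1 - m, by omega, ?_⟩
  rw [sfS, show S.card - 1 - (S.card - 1 - m) = m by omega,
    List.getD_eq_getElem _ _ (by omega)]
  simpa [List.get_eq_getElem] using hmt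

variable {S}

lemma sfS_pos (hS : 0 ∉ S) {i : ℕ} (hi : i < S.card) : 0 < sfS S i := by
  have := sfS_mem S hi
  cases Nat.eq_zero_or_pos (sfS S i) with
  | inl h => exact absurd (h ▸ this) hS
  | inr h => exact h

lemma sfS_lb (hS : 0 ∉ S) {i : ℕ} (hi : i < S.card) : S.card ≤ sfS S i + i := by
  have h1 := sfS_chain S (by omega : i ≤ S.card - 1) (by omega)
  have h2 := sfS_pos hS (by omega : S.card - 1 < S.card)
  omega

/-- the Young diagram with beta-set `S` -/
def dS (hS : 0 ∉ S) : YoungDiagram where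
  cells := ((Finset.range S.card) ×ˢ (Finset.range (sfS S 0 + 1))).filter
    (fun c => c.2 + S.card ≤ sfS S c.1 + c.1)
  isLowerSet := by
    rintro ⟨i2, j2⟩ ⟨i1, j1⟩ ⟨(hi : i1 ≤ i2), (hj : j1 ≤ j2)⟩ hmem
    simp only [Finset.mem_coe, Finset.mem_filter, Finset.mem_product, Finset.mem_range] at hmem ⊢
    obtain ⟨⟨hir, hjM⟩, hcond⟩ := hmem
    have hchain := sfS_chain S hi hir
    refine ⟨⟨by omega, by omega⟩, by omega⟩

lemma mem_dS (hS : 0 ∉ S) {i j : ℕ} :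
    (i, j) ∈ dS hS ↔ (i < S.card ∧ j + S.card ≤ sfS S i + i) := by
  show (i, j) ∈ (dS hS).cells ↔ _
  simp only [dS, Finset.mem_filter, Finset.mem_product, Finset.mem_range]
  constructor
  · rintro ⟨⟨h1, h2⟩, h3⟩; exact ⟨h1, h3⟩
  · rintro ⟨h1, h2⟩
    refine ⟨⟨h1, ?_⟩, h2⟩
    have := sfS_chain S (Nat.zero_le i) h1
    omega

lemma rowLen_dS (hS : 0 ∉ S) {i : ℕ} (hi : i < S.card) :
    (dS hS).rowLen i + S.card = sfS S i + i + 1 := by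
  have hv : ∀ j, (i, j) ∈ dS hS ↔ j + S.card ≤ sfS S i + i := by
    intro j; rw [mem_dS hS]; omega
  have hlb := sfS_lb hS hi
  obtain ⟨v, hveq⟩ : ∃ v, v + S.card = sfS S i + i + 1 := ⟨sfS S i + i + 1 - S.card, by omega⟩
  have hpos : 0 < v := by omega
  have h1 : (i, v - 1) ∈ dS hS := (hv _).mpr (by omega)
  have h2 : ¬ (i, v) ∈ dS hS := by rw [hv]; omega
  rw [mem_iff_lt_rowLen] at h1 h2
  omega

lemma colLen0_dS (hS : 0 ∉ S) : (dS hS).colLen 0 = S.card := by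
  rcases Nat.eq_zero_or_pos S.card with h0 | h0
  · have h2 : ¬ (0, 0) ∈ dS hS := by rw [mem_dS hS]; omega
    rw [mem_iff_lt_colLen] at h2
    omega
  · have h1 : (S.card - 1, 0) ∈ dS hS := by
      rw [mem_dS hS]
      have := sfS_lb hS (by omega : S.card - 1 < S.card)
      omega
    have h2 : ¬ (S.card, 0) ∈ dS hS := by rw [mem_dS hS]; omega
    rw [mem_iff_lt_colLen] at h1 h2
    omega

lemma beta_dS (hS : 0 ∉ S) : beta (dS hS) = S := by
  rw [beta, colLen0_dS hS]
  apply Finset.Subset.antisymm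
  · intro t ht
    simp only [Finset.mem_image, Finset.mem_range] at ht
    obtain ⟨i, hi, hit⟩ := ht
    have hr := rowLen_dS hS hi
    have : sfun (dS hS) i = sfS S i := by
      rw [sfun, colLen0_dS hS]
      have := sfS_lb hS hi
      omega
    rw [← hit, this]
    exact sfS_mem S hi
  · intro t ht
    obtain ⟨i, hi, hit⟩ := sfS_surj S ht
    simp only [Finset.mem_image, Finset.mem_range]
    refine ⟨i, hi, ?_⟩
    have hr := rowLen_dS hS hi
    rw [sfun, colLen0_dS hS]
    have := sfS_lb hS hi
    omega

end Construct
section Columns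

variable {a b : ℕ}

/-- capacity of column `x` -/
def cap (a b x : ℕ) : ℕ := x * a / b

/-- the column of `S` at `x` : elements congruent to `x*a` mod `b` -/
def colS (a b : ℕ) (S : Finset ℕ) (x : ℕ) : Finset ℕ :=
  S.filter (fun n => n % b = (x * a) % b)

def HS (a b : ℕ) (S : Finset ℕ) (x : ℕ) : ℕ := cap a b x - (colS a b S x).card

/-- beta-sets of (a,b)-cores -/
def GB (a b : ℕ) (S : Finset ℕ) : Prop := 0 ∉ S ∧ Closed S a ∧ Closed S b

lemma le_cap_iff (hb : 0 < b) {k x : ℕ} : k ≤ cap a b x ↔ k * b ≤ x * a :=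
  Nat.le_div_iff_mul_le hb

lemma not_dvd_xa (hab : Nat.Coprime a b) {x : ℕ} (hx : 0 < x) (hxb : x < b) :
    ¬ b ∣ x * a := by
  intro hdvd
  have h1 := (Nat.Coprime.dvd_of_dvd_mul_right (Nat.Coprime.symm hab) hdvd)
  have := Nat.le_of_dvd hx h1
  omega

lemma le_cap_iff' (hb : 0 < b) (hab : Nat.Coprime a b) {k x : ℕ} (hx : 0 < x) (hxb : x < b) :
    k ≤ cap a b x ↔ k * b < x * a := by
  rw [le_cap_iff hb]
  constructor
  · intro h
    rcases Nat.eq_or_lt_of_le h with he | hl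
    · have hdd : b ∣ x * a := ⟨k, by rw [← he]; ring⟩
      exact absurd hdd (not_dvd_xa hab hx hxb)
    · exact hl
  · omega

lemma cap_mono {x y : ℕ} (hxy : x ≤ y) : cap a b x ≤ cap a b y :=
  Nat.div_le_div_right (Nat.mul_le_mul_right a hxy)

variable {S : Finset ℕ}

lemma not_dvd_mem (hb : 0 < b) (hG : GB a b S) : ∀ n ∈ S, ¬ b ∣ n := by
  obtain ⟨h0, hA, hB⟩ := id hG
  intro n
  induction n using Nat.strong_induction_on with
  | _ n ih =>
    intro hn hdvd
    have hnz : n ≠ 0 := fun h => h0 (h ▸ hn)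
    have hnb : b ≤ n := Nat.le_of_dvd (by omega) hdvd
    have h1 : n - b ∈ S := hB n hn hnb
    have h2 : b ∣ n - b := (Nat.dvd_sub hdvd dvd_rfl)
    exact ih (n - b) (by omega) h1 h2

lemma colbound (hb : 0 < b) (hG : GB a b S) : ∀ x, x < b → ∀ n ∈ S, n % b = (x * a) % b → n < x * a := by
  obtain ⟨h0, hA, hB⟩ := id hG
  intro x
  induction x with
  | zero =>
    intro _ n hn hmod
    simp only [Nat.zero_mul, Nat.zero_mod] at hmod
    exact absurd (Nat.dvd_of_mod_eq_zero hmod) (not_dvd_mem hb hG n hn)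
  | succ m ih =>
    intro hxb n hn hmod
    by_contra hge
    have hge' : (m + 1) * a ≤ n := by omega
    have hma : a ≤ n := le_trans (by nlinarith : a ≤ (m+1)*a) hge'
    have h1 : n - a ∈ S := hA n hn hma
    have hmod2 : (n - a) % b = (m * a) % b := by
      have heq : (n - a) + a = n := by omega
      have heq2 : m * a + a = (m + 1) * a := by ring
      have : ((n - a) + a) % b = (m * a + a) % b := by rw [heq, heq2]; exact hmod
      exact Nat.ModEq.add_right_cancel' a this
    have := ih (by omega) (n - a) h1 hmod2
    have heq2 : m * a + a = (m + 1) * a := by ring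
    omega

/-- structure of a column of a core beta-set -/
lemma colstruct (hb : 0 < b) (hG : GB a b S) {x : ℕ} (hx : 0 < x) (hxb : x < b) :
    colS a b S x
      = (Finset.Ico (HS a b S x) (cap a b x)).image (fun k => x * a - (k+1) * b) := by
  obtain ⟨h0, hA, hB⟩ := id hG
  set K := (Finset.range (cap a b x)).filter (fun k => x * a - (k+1) * b ∈ S) with hKdef
  have hmemK : ∀ k, k ∈ K ↔ (k < cap a b x ∧ x * a - (k+1) * b ∈ S) := by
    intro k; simp [hKdef]
  -- K is up-closed
  have hseg : K = Finset.Ico (cap a b x - K.card) (cap a b x) := by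
    rw [hKdef]
    apply up_seg
    intro k hk hPk
    have hk2 : (k + 2) * b ≤ x * a := (le_cap_iff hb).mp (by omega)
    have he1 : (k + 2) * b = (k+1) * b + b := by ring
    have he2 : (k + 1 + 1) = k + 2 := by omega
    have hnS : x * a - (k+1) * b ∈ S := hPk
    have hbig : b ≤ x * a - (k+1) * b := by omega
    have := hB _ hnS hbig
    have harith : x * a - (k+1) * b - b = x * a - (k+2) * b := by omega
    rw [harith] at this
    rw [he2]
    exact this
  -- colS = K.image f
  have himg : colS a b S x = K.image (fun k => x * a - (k+1) * b) := by
    apply Finset.Subset.antisymm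
    · intro n hn
      simp only [colS, Finset.mem_filter] at hn
      obtain ⟨hnS, hnmod⟩ := hn
      have hlt : n < x * a := colbound hb hG x hxb n hnS hnmod
      have hdvd : b ∣ x * a - n := (Nat.modEq_iff_dvd' (le_of_lt hlt)).mp hnmod
      obtain ⟨m, hm⟩ := hdvd
      rw [mul_comm b m] at hm
      have hm1 : 1 ≤ m := by
        rcases Nat.eq_zero_or_pos m with h | h
        · simp [h] at hm; omega
        · exact h
      have heqk : (m - 1 + 1) * b = m * b := by
        congr 1; omega
      simp only [Finset.mem_image]
      refine ⟨m - 1, (hmemK _).mpr ⟨?_, ?_⟩, ?_⟩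
      · have hnz : n ≠ 0 := fun h => h0 (h ▸ hnS)
        have hmc : m ≤ cap a b x := (le_cap_iff hb).mpr (by omega)
        omega
      · rw [heqk]
        have hxn : x * a - m * b = n := by omega
        rwa [hxn]
      · rw [heqk]; omega
    · intro n hn
      simp only [Finset.mem_image] at hn
      obtain ⟨k, hk, hkn⟩ := hn
      rw [hmemK] at hk
      obtain ⟨hkc, hkS⟩ := hk
      have hsub : (k+1) * b ≤ x * a := (le_cap_iff hb).mp (by omega)
      simp only [colS, Finset.mem_filter]
      refine ⟨hkn ▸ hkS, ?_⟩
      rw [← hkn]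
      have : x * a - (k+1) * b + (k+1) * b = x * a := by omega
      calc (x * a - (k+1) * b) % b = (x * a - (k+1) * b + (k+1) * b) % b := by
            rw [Nat.add_mul_mod_self_right]
        _ = (x * a) % b := by rw [this]
  -- cardinality
  have hcard : (colS a b S x).card = K.card := by
    rw [himg]
    apply Finset.card_image_of_injOn
    intro p hp q hq hpq
    rw [Finset.mem_coe, hmemK] at hp hq
    have hpq' : x * a - (p+1) * b = x * a - (q+1) * b := hpq
    have hp2 : (p+1) * b ≤ x * a := (le_cap_iff hb).mp (by omega)
    have hq2 : (q+1) * b ≤ x * a := (le_cap_iff hb).mp (by omega)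
    have : (p+1) * b = (q+1) * b := by omega
    have := Nat.eq_of_mul_eq_mul_right hb this
    omega
  rw [himg, hseg, HS, hcard]

end Columns
section HSsec

variable {a b : ℕ}

lemma cap_zero : cap a b 0 = 0 := by simp [cap]

lemma residue_inj (hb : 0 < b) (hab : Nat.Coprime a b) {x y : ℕ} (hx : x < b) (hy : y < b)
    (h : (x * a) % b = (y * a) % b) : x = y := by
  have h2 : x ≡ y [MOD b] := Nat.ModEq.cancel_right_of_coprime (by rw [Nat.coprime_comm] at hab; exact hab) h
  have := h2.eq_of_lt_of_lt hx hy
  exact this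

lemma exists_residue (hb : 0 < b) (hab : Nat.Coprime a b) (n : ℕ) :
    ∃ x < b, (x * a) % b = n % b := by
  have himg : (Finset.range b).image (fun x => (x * a) % b) = Finset.range b := by
    apply Finset.eq_of_subset_of_card_le
    · intro t ht
      simp only [Finset.mem_image] at ht
      obtain ⟨x, _, hxt⟩ := ht
      simp only [Finset.mem_range]
      rw [← hxt]
      exact Nat.mod_lt _ hb
    · rw [Finset.card_image_of_injOn, Finset.card_range]
      intro x hx y hy hxy
      simp only [Finset.mem_coe, Finset.mem_range] at hx hy
      exact residue_inj hb hab hx hy hxy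
  have hn : n % b ∈ Finset.range b := Finset.mem_range.mpr (Nat.mod_lt _ hb)
  rw [← himg] at hn
  simp only [Finset.mem_image, Finset.mem_range] at hn
  obtain ⟨x, hx, hxe⟩ := hn
  exact ⟨x, hx, hxe⟩

lemma mem_colS {S : Finset ℕ} {x n : ℕ} :
    n ∈ colS a b S x ↔ n ∈ S ∧ n % b = (x * a) % b := by
  simp [colS]

lemma mem_of_eq_sub {x k : ℕ} (hsub : (k+1) * b ≤ x * a) :
    (x * a - (k+1) * b) % b = (x * a) % b := by
  have h2 : x * a - (k+1) * b + (k+1) * b = x * a := by omega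
  calc (x * a - (k+1) * b) % b = (x * a - (k+1) * b + (k+1) * b) % b := by
        rw [Nat.add_mul_mod_self_right]
    _ = (x * a) % b := by rw [h2]

lemma HS_step (ha : 0 < a) (hb : 0 < b) (hab : Nat.Coprime a b) {S : Finset ℕ}
    (hG : GB a b S) {x : ℕ} (hxb : x + 1 < b) : HS a b S x ≤ HS a b S (x+1) := by
  rcases Nat.eq_zero_or_pos x with h0 | hx
  · subst h0
    simp [HS, cap_zero]
  by_contra hlt
  push_neg at hlt
  -- h2 < h1 ≤ c1 ≤ c2
  set h1 := HS a b S x with hh1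
  set h2 := HS a b S (x+1) with hh2
  have hc12 : cap a b x ≤ cap a b (x+1) := cap_mono (by omega)
  have hcs1 := colstruct hb hG hx (by omega : x < b)
  have hcs2 := colstruct hb hG (by omega : 0 < x + 1) hxb
  have hh1c : h1 ≤ cap a b x := Nat.sub_le _ _
  -- n := (x+1)a - (h2+1)b ∈ S
  have hk0 : h2 ∈ Finset.Ico h2 (cap a b (x+1)) := Finset.mem_Ico.mpr ⟨le_refl _, by omega⟩
  have hnmem : (x+1) * a - (h2+1) * b ∈ colS a b S (x+1) := by
    rw [hcs2]
    exact Finset.mem_image_of_mem _ hk0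
  have hnS : (x+1) * a - (h2+1) * b ∈ S := (mem_colS.mp hnmem).1
  have hsub2 : (h2+1) * b ≤ x * a := (le_cap_iff hb).mp (by omega)
  have hea : (x+1) * a = x * a + a := by ring
  have hna : a ≤ (x+1) * a - (h2+1) * b := by omega
  have hn2 : (x+1) * a - (h2+1) * b - a ∈ S := hG.2.1 _ hnS hna
  have hn2e : (x+1) * a - (h2+1) * b - a = x * a - (h2+1) * b := by omega
  rw [hn2e] at hn2
  have hn2col : x * a - (h2+1) * b ∈ colS a b S x :=
    mem_colS.mpr ⟨hn2, mem_of_eq_sub hsub2⟩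
  rw [hcs1] at hn2col
  simp only [Finset.mem_image, Finset.mem_Ico] at hn2col
  obtain ⟨k, ⟨hk1, hk2⟩, hke⟩ := hn2col
  have hkb : (k+1) * b ≤ x * a := (le_cap_iff hb).mp (by omega)
  have : (k+1) * b = (h2+1) * b := by omega
  have := Nat.eq_of_mul_eq_mul_right hb this
  omega

lemma HS_mono (ha : 0 < a) (hb : 0 < b) (hab : Nat.Coprime a b) {S : Finset ℕ}
    (hG : GB a b S) : ∀ x y, x ≤ y → y < b → HS a b S x ≤ HS a b S y := by
  intro x y hxy hyb
  induction y with
  | zero =>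
    have : x = 0 := by omega
    simp [this]
  | succ n ih =>
    rcases Nat.eq_or_lt_of_le hxy with h | h
    · simp [h]
    · exact le_trans (ih (by omega) (by omega)) (HS_step ha hb hab hG hyb)

lemma col_zero (hb : 0 < b) {S : Finset ℕ} (hG : GB a b S) : colS a b S 0 = ∅ := by
  rw [Finset.eq_empty_iff_forall_notMem]
  intro n hn
  rw [mem_colS] at hn
  simp only [Nat.zero_mul, Nat.zero_mod] at hn
  exact not_dvd_mem hb hG n hn.1 (Nat.dvd_of_mod_eq_zero hn.2)

lemma HS_inj (hb : 0 < b) (hab : Nat.Coprime a b) {S S' : Finset ℕ}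
    (hG : GB a b S) (hG' : GB a b S') (h : ∀ x, x < b → HS a b S x = HS a b S' x) :
    S = S' := by
  have key : ∀ (T T' : Finset ℕ), GB a b T → GB a b T' →
      (∀ x, x < b → HS a b T x = HS a b T' x) → T ⊆ T' := by
    intro T T' hT hT' hH n hn
    obtain ⟨x, hxb, hxe⟩ := exists_residue hb hab n
    have hncol : n ∈ colS a b T x := mem_colS.mpr ⟨hn, hxe.symm⟩
    rcases Nat.eq_zero_or_pos x with h0 | hx
    · rw [h0, col_zero hb hT] at hncol
      exact absurd hncol (Finset.notMem_empty n)
    · rw [colstruct hb hT hx hxb, hH x hxb, ← colstruct hb hT' hx hxb] at hncol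
      exact (mem_colS.mp hncol).1
  exact Finset.Subset.antisymm (key S S' hG hG' h)
    (key S' S hG' hG (fun x hx => (h x hx).symm))

/-- the set of bounded monotone functions -/
def MM (a b : ℕ) : Set (Fin b → ℕ) :=
  {H | (∀ x y : Fin b, x ≤ y → H x ≤ H y) ∧ ∀ x : Fin b, H x * b ≤ x.val * a}

/-- the beta-set associated to a bounded monotone function -/
def SH (a b : ℕ) (H : Fin b → ℕ) : Finset ℕ :=
  Finset.univ.biUnion
    (fun x : Fin b => (Finset.Ico (H x) (cap a b x.val)).image (fun k => x.val * a - (k+1) * b))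

lemma mem_SH {H : Fin b → ℕ} {n : ℕ} :
    n ∈ SH a b H ↔ ∃ x : Fin b, ∃ k, H x ≤ k ∧ k < cap a b x.val ∧ x.val * a - (k+1) * b = n := by
  simp only [SH, Finset.mem_biUnion, Finset.mem_univ, true_and, Finset.mem_image,
    Finset.mem_Ico]
  constructor
  · rintro ⟨x, k, ⟨h1, h2⟩, h3⟩; exact ⟨x, k, h1, h2, h3⟩
  · rintro ⟨x, k, h1, h2, h3⟩; exact ⟨x, k, ⟨h1, h2⟩, h3⟩

lemma SH_pos (ha : 0 < a) (hb : 0 < b) (hab : Nat.Coprime a b)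
    {x : Fin b} {k : ℕ} (hk : k < cap a b x.val) :
    0 < x.val ∧ (k+1) * b < x.val * a := by
  have hxpos : 0 < x.val := by
    by_contra h0
    have : x.val = 0 := by omega
    rw [this, cap_zero] at hk
    omega
  exact ⟨hxpos, (le_cap_iff' hb hab hxpos x.isLt).mp (by omega)⟩

lemma GB_SH (ha : 0 < a) (hb : 0 < b) (hab : Nat.Coprime a b) {H : Fin b → ℕ}
    (hH : H ∈ MM a b) : GB a b (SH a b H) := by
  obtain ⟨hmono, hbd⟩ := hH
  refine ⟨?_, ?_, ?_⟩
  · intro h0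
    obtain ⟨x, k, hk1, hk2, hke⟩ := mem_SH.mp h0
    obtain ⟨hxp, hlt⟩ := SH_pos ha hb hab hk2
    omega
  · -- Closed under subtracting a
    intro n hn han
    obtain ⟨x, k, hk1, hk2, hke⟩ := mem_SH.mp hn
    obtain ⟨hxp, hlt⟩ := SH_pos ha hb hab hk2
    have hea : x.val * a = (x.val - 1) * a + a := by
      have : x.val - 1 + 1 = x.val := by omega
      calc x.val * a = (x.val - 1 + 1) * a := by rw [this]
        _ = (x.val - 1) * a + a := by ring
    -- (k+1) * b ≤ (x-1) * a
    have hsub : (k+1) * b + a ≤ x.val * a := by omega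
    have hx1pos : 0 < x.val - 1 := by
      by_contra h0
      have hx1 : x.val - 1 = 0 := by omega
      rw [hea, hx1] at hsub
      simp at hsub
      omega
    have hx1b : x.val - 1 < b := by omega
    have hkcap : k + 1 ≤ cap a b (x.val - 1) :=
      (le_cap_iff hb).mpr (by
        have : (k + 1) * b + a ≤ ((x:ℕ) - 1) * a + a := by omega
        omega)
    rw [mem_SH]
    refine ⟨⟨x.val - 1, by omega⟩, k, ?_, hkcap, ?_⟩
    · exact le_trans (hmono ⟨x.val - 1, by omega⟩ x (by simp [Fin.le_def])) hk1
    · show (x.val - 1) * a - (k+1) * b = n - a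
      omega
  · -- Closed under subtracting b
    intro n hn hbn
    obtain ⟨x, k, hk1, hk2, hke⟩ := mem_SH.mp hn
    obtain ⟨hxp, hlt⟩ := SH_pos ha hb hab hk2
    have he2 : (k+2) * b = (k+1) * b + b := by ring
    have hne : b ∣ x.val * a → False := not_dvd_xa hab hxp x.isLt
    have hsub2 : (k+2) * b ≤ x.val * a := by omega
    have hsub2' : (k+2) * b ≠ x.val * a := by
      intro h
      exact hne ⟨k+2, by rw [← h]; ring⟩
    have hkcap : k + 1 < cap a b x.val := by
      have : k + 2 ≤ cap a b x.val := (le_cap_iff hb).mpr (by omega)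
      omega
    rw [mem_SH]
    refine ⟨x, k+1, by omega, hkcap, ?_⟩
    have : (k+1+1) * b = (k+1) * b + b := by ring
    omega

lemma colS_SH (ha : 0 < a) (hb : 0 < b) (hab : Nat.Coprime a b) {H : Fin b → ℕ}
    (hH : H ∈ MM a b) (x : Fin b) :
    colS a b (SH a b H) x.val
      = (Finset.Ico (H x) (cap a b x.val)).image (fun k => x.val * a - (k+1) * b) := by
  apply Finset.Subset.antisymm
  · intro n hn
    obtain ⟨hnS, hnmod⟩ := mem_colS.mp hn
    obtain ⟨y, k, hk1, hk2, hke⟩ := mem_SH.mp hnS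
    obtain ⟨hyp, hylt⟩ := SH_pos ha hb hab hk2
    have hmod2 : n % b = (y.val * a) % b := by
      rw [← hke]; exact mem_of_eq_sub (by omega)
    have hxy : y.val = x.val := by
      rcases Nat.eq_zero_or_pos x.val with h0 | hxp
      · -- x = 0 : then n ≡ 0 mod b; but n = ya - (k+1)b with y > 0... contradiction? 
        exfalso
        rw [h0] at hnmod
        simp only [Nat.zero_mul, Nat.zero_mod] at hnmod
        -- b ∣ n and n ∈ SH : contradicts GB
        exact not_dvd_mem hb (GB_SH ha hb hab hH) n hnS (Nat.dvd_of_mod_eq_zero hnmod)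
      · exact residue_inj hb hab y.isLt x.isLt (by rw [← hmod2, hnmod])
    have hyx : y = x := Fin.ext hxy
    subst hyx
    simp only [Finset.mem_image, Finset.mem_Ico]
    exact ⟨k, ⟨hk1, hk2⟩, hke⟩
  · intro n hn
    simp only [Finset.mem_image, Finset.mem_Ico] at hn
    obtain ⟨k, ⟨hk1, hk2⟩, hke⟩ := hn
    refine mem_colS.mpr ⟨mem_SH.mpr ⟨x, k, hk1, hk2, hke⟩, ?_⟩
    rw [← hke]
    exact mem_of_eq_sub ((le_cap_iff hb).mp (by omega))

lemma HS_SH (ha : 0 < a) (hb : 0 < b) (hab : Nat.Coprime a b) {H : Fin b → ℕ}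
    (hH : H ∈ MM a b) (x : Fin b) : HS a b (SH a b H) x.val = H x := by
  rw [HS, colS_SH ha hb hab hH x]
  rw [Finset.card_image_of_injOn, Nat.card_Ico]
  · have hcap : H x ≤ cap a b x.val := (le_cap_iff hb).mpr (hH.2 x)
    omega
  · intro p hp q hq hpq
    rw [Finset.coe_Ico, Set.mem_Ico] at hp hq
    have hpq' : x.val * a - (p+1) * b = x.val * a - (q+1) * b := hpq
    have hp2 : (p+1) * b ≤ x.val * a := (le_cap_iff hb).mp (by omega)
    have hq2 : (q+1) * b ≤ x.val * a := (le_cap_iff hb).mp (by omega)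
    have : (p+1) * b = (q+1) * b := by omega
    have := Nat.eq_of_mul_eq_mul_right hb this
    omega

/-- map from beta-sets to monotone functions -/
def phi1 (a b : ℕ) (S : Finset ℕ) : Fin b → ℕ := fun x => HS a b S x.val

lemma phi1_image (ha : 0 < a) (hb : 0 < b) (hab : Nat.Coprime a b) :
    phi1 a b '' {S | GB a b S} = MM a b := by
  apply Set.Subset.antisymm
  · rintro H ⟨S, hS, rfl⟩
    constructor
    · intro x y hxy
      exact HS_mono ha hb hab hS x.val y.val hxy y.isLt
    · intro x
      have h1 : HS a b S x.val ≤ cap a b x.val := Nat.sub_le _ _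
      exact (le_cap_iff hb).mp h1
  · intro H hH
    refine ⟨SH a b H, GB_SH ha hb hab hH, ?_⟩
    funext x
    exact HS_SH ha hb hab hH x

lemma phi1_injOn (hb : 0 < b) (hab : Nat.Coprime a b) :
    Set.InjOn (phi1 a b) {S | GB a b S} := by
  intro S hS S' hS' h
  apply HS_inj hb hab hS hS'
  intro x hx
  have := congrFun h ⟨x, hx⟩
  exact this

end HSsec
section Words

variable {a b : ℕ}

/-- the letter of the periodic word of `A` at position `p` -/
def wrd (A : Finset (Fin (a+b))) (p : ℕ) : Prop := ∃ i ∈ A, (i : ℕ) = p % (a+b)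

instance wrd_dec (A : Finset (Fin (a+b))) (p : ℕ) : Decidable (wrd A p) := by
  unfold wrd; infer_instance

/-- partial sums : +a for each `E` step, −b for each `N` step -/
def FF (a b : ℕ) (A : Finset (Fin (a+b))) : ℕ → ℤ
  | 0 => 0
  | p+1 => FF a b A p + if wrd A p then (a : ℤ) else -(b : ℤ)

lemma FF_succ (A : Finset (Fin (a+b))) (p : ℕ) :
    FF a b A (p+1) = FF a b A p + if wrd A p then (a : ℤ) else -(b : ℤ) := rfl

lemma wrd_lt {A : Finset (Fin (a+b))} {p : ℕ} (hp : p < a + b) :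
    wrd A p ↔ (⟨p, hp⟩ : Fin (a+b)) ∈ A := by
  constructor
  · rintro ⟨i, hi, hv⟩
    have : i = ⟨p, hp⟩ := Fin.ext (by rw [hv, Nat.mod_eq_of_lt hp])
    exact this ▸ hi
  · intro h
    exact ⟨⟨p, hp⟩, h, by simp [Nat.mod_eq_of_lt hp]⟩

lemma wrd_per {A : Finset (Fin (a+b))} (p : ℕ) : wrd A (p + (a+b)) ↔ wrd A p := by
  unfold wrd
  rw [Nat.add_mod_right]

/-- prefix count of `E` letters -/
def ep (A : Finset (Fin (a+b))) (p : ℕ) : ℕ :=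
  (Finset.range p).filter (fun q => wrd A q) |>.card

lemma ep_succ (A : Finset (Fin (a+b))) (p : ℕ) :
    ep A (p+1) = ep A p + if wrd A p then 1 else 0 := by
  unfold ep
  rw [Finset.range_add_one, Finset.filter_insert]
  by_cases h : wrd A p
  · simp only [h, if_true]
    rw [Finset.card_insert_of_notMem (fun hc => by
      simp only [Finset.mem_filter, Finset.mem_range] at hc; omega)]
  · simp [h]

lemma FF_eq (A : Finset (Fin (a+b))) (p : ℕ) :
    FF a b A p = (a+b) * (ep A p : ℤ) - b * p := by
  classical
  induction p with
  | zero => simp [FF, ep]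
  | succ q ih =>
    rw [FF_succ, ih, ep_succ A q]
    by_cases h : wrd A q <;> simp [h] <;> push_cast <;> ring

lemma ep_mono (A : Finset (Fin (a+b))) {p q : ℕ} (h : p ≤ q) : ep A p ≤ ep A q := by
  classical
  apply Finset.card_le_card
  exact Finset.filter_subset_filter _ (Finset.range_subset_range.mpr h)

lemma coprime_ab (hab : Nat.Coprime a b) : Nat.Coprime (a+b) b := by
  simpa using (Nat.coprime_add_self_left (m := a) (n := b)).mpr hab

/-- distinct partial sums within a window -/
lemma FF_inj (hab : Nat.Coprime a b) (A : Finset (Fin (a+b))) {p q : ℕ}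
    (hpq : p ≤ q) (hwin : q < p + (a+b)) (he : FF a b A p = FF a b A q) : p = q := by
  rw [FF_eq, FF_eq] at he
  have hep := ep_mono A hpq
  have hn : (a+b) * ep A p + b * q = (a+b) * ep A q + b * p := by
    have h2 : ((a+b) * ep A p + b * q : ℤ) = (a+b) * ep A q + b * p := by push_cast; linarith
    exact_mod_cast h2
  obtain ⟨c, hc⟩ : ∃ c, q = p + c := ⟨q - p, by omega⟩
  obtain ⟨e, hee⟩ : ∃ e, ep A q = ep A p + e := ⟨ep A q - ep A p, by omega⟩
  rw [hee, hc] at hn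
  have hbc : b * c = a * e + b * e := by ring_nf at hn ⊢; omega
  have hdvd : (a + b) ∣ b * c := ⟨e, by rw [hbc]; ring⟩
  have hdc : (a + b) ∣ c := Nat.Coprime.dvd_of_dvd_mul_left (coprime_ab hab) hdvd
  have := Nat.eq_zero_of_dvd_of_lt hdc (by omega)
  omega

/-- total sum over a full period is zero -/
lemma FF_total (A : Finset (Fin (a+b))) (hA : A.card = b) : FF a b A (a+b) = 0 := by
  classical
  have hepN : ep A (a+b) = A.card := by
    unfold ep
    apply Finset.card_bij (fun q hq => (⟨q, (Finset.mem_range.mp (Finset.mem_filter.mp hq).1)⟩ : Fin (a+b)))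
    · intro q hq
      obtain ⟨hq1, hq2⟩ := Finset.mem_filter.mp hq
      exact (wrd_lt (Finset.mem_range.mp hq1)).mp hq2
    · intro q hq q' hq' he
      exact congrArg Fin.val he
    · intro i hi
      refine ⟨i.val, Finset.mem_filter.mpr ⟨Finset.mem_range.mpr i.isLt, (wrd_lt i.isLt).mpr (by simpa using hi)⟩, rfl⟩
  rw [FF_eq, hepN, hA]
  push_cast
  ring

lemma FF_per (A : Finset (Fin (a+b))) (hA : A.card = b) (p : ℕ) :
    FF a b A (p + (a+b)) = FF a b A p := by
  induction p with
  | zero =>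
    show FF a b A (0 + (a+b)) = 0
    rw [Nat.zero_add]; exact FF_total A hA
  | succ q ih =>
    have : q + 1 + (a+b) = (q + (a+b)) + 1 := by omega
    rw [this, FF_succ, FF_succ, ih]
    congr 1
    exact if_congr (wrd_per q) rfl rfl

lemma FF_per_mul (A : Finset (Fin (a+b))) (hA : A.card = b) (p m : ℕ) :
    FF a b A (p + m * (a+b)) = FF a b A p := by
  induction m with
  | zero => simp
  | succ n ih =>
    have : p + (n+1) * (a+b) = (p + n * (a+b)) + (a+b) := by ring
    rw [this, FF_per A hA, ih]

/-- goodness : all partial sums nonnegative -/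
def Good (a b : ℕ) (A : Finset (Fin (a+b))) : Prop := ∀ p, p ≤ a + b → 0 ≤ FF a b A p

lemma good_global {A : Finset (Fin (a+b))} (hA : A.card = b) (hg : Good a b A) :
    ∀ p, 0 ≤ FF a b A p := by
  intro p
  rcases Nat.eq_zero_or_pos (a+b) with h0 | hpos
  · have ha0 : a = 0 := by omega
    have hb0 : b = 0 := by omega
    subst ha0; subst hb0
    rw [FF_eq]
    simp
  have hdecomp : p = p % (a+b) + (p / (a+b)) * (a+b) := by
    rw [Nat.mod_add_div']
  rw [hdecomp, FF_per_mul A hA]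
  exact hg _ (le_of_lt (Nat.mod_lt _ hpos))

end Words
section Cycle

variable {a b : ℕ}

lemma wrd_rot (hb : 0 < b) (A : Finset (Fin (a+b))) (k : Fin (a+b)) (p : ℕ) :
    wrd (A.image (· - k)) p ↔ wrd A (p + k.val) := by
  haveI : NeZero (a+b) := ⟨by omega⟩
  constructor
  · rintro ⟨i, hi, hv⟩
    obtain ⟨j, hj, rfl⟩ := Finset.mem_image.mp hi
    refine ⟨j, hj, ?_⟩
    conv_lhs => rw [show j = (j - k) + k from (sub_add_cancel j k).symm]
    rw [Fin.val_add, hv, Nat.mod_add_mod]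
  · rintro ⟨j, hj, hv⟩
    refine ⟨j - k, Finset.mem_image_of_mem _ hj, ?_⟩
    have hmk : ((⟨p % (a+b), Nat.mod_lt _ (by omega)⟩ : Fin (a+b)) + k) = j := by
      apply Fin.ext
      rw [Fin.val_add]
      show (p % (a+b) + k.val) % (a+b) = j.val
      rw [Nat.mod_add_mod, hv]
    rw [← hmk, add_sub_cancel_right]

lemma FF_rot (hb : 0 < b) (A : Finset (Fin (a+b))) (k : Fin (a+b)) (j : ℕ) :
    FF a b (A.image (· - k)) j = FF a b A (k.val + j) - FF a b A k.val := by
  induction j with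
  | zero => simp [FF]
  | succ m ih =>
    rw [FF_succ, ih, show k.val + (m+1) = (k.val + m) + 1 by omega, FF_succ]
    have hiff : wrd (A.image (· - k)) m ↔ wrd A (k.val + m) := by
      rw [wrd_rot hb, Nat.add_comm]
    rw [if_congr hiff rfl rfl]
    ring

lemma card_rot (hb : 0 < b) (A : Finset (Fin (a+b))) (k : Fin (a+b)) :
    (A.image (· - k)).card = A.card := by
  haveI : NeZero (a+b) := ⟨by omega⟩
  exact Finset.card_image_of_injective A (fun x y h => sub_left_inj.mp h)

lemma rot_inv (hb : 0 < b) (A : Finset (Fin (a+b))) (k : Fin (a+b)) :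
    (A.image (· + k)).image (· - k) = A := by
  haveI : NeZero (a+b) := ⟨by omega⟩
  rw [Finset.image_image]
  have he : ((· - k) ∘ (· + k)) = (id : Fin (a+b) → Fin (a+b)) := by
    funext x; simp
  rw [he, Finset.image_id]

lemma rot_inv' (hb : 0 < b) (A : Finset (Fin (a+b))) (k : Fin (a+b)) :
    (A.image (· - k)).image (· + k) = A := by
  haveI : NeZero (a+b) := ⟨by omega⟩
  rw [Finset.image_image]
  have he : ((· + k) ∘ (· - k)) = (id : Fin (a+b) → Fin (a+b)) := by
    funext x; simp
  rw [he, Finset.image_id]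

lemma exists_good_rot (hab : Nat.Coprime a b) (hb : 0 < b)
    (A : Finset (Fin (a+b))) (hA : A.card = b) :
    ∃! k : Fin (a+b), Good a b (A.image (· - k)) := by
  haveI : NeZero (a+b) := ⟨by omega⟩
  obtain ⟨m, hm, hmin⟩ := Finset.exists_min_image (Finset.range (a+b)) (FF a b A)
    ⟨0, Finset.mem_range.mpr (by omega)⟩
  have hmlt : m < a + b := Finset.mem_range.mp hm
  have hglobal : ∀ p, FF a b A m ≤ FF a b A p := by
    intro p
    have hdecomp : p = p % (a+b) + (p / (a+b)) * (a+b) := by rw [Nat.mod_add_div']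
    rw [hdecomp, FF_per_mul A hA]
    exact hmin _ (Finset.mem_range.mpr (Nat.mod_lt _ (by omega)))
  -- key : rotation by k is good iff FF at k.val is the global min
  have hkey : ∀ k : Fin (a+b), Good a b (A.image (· - k)) ↔ (∀ p, FF a b A k.val ≤ FF a b A p) := by
    intro k
    constructor
    · intro hgood p
      have hcard : (A.image (· - k)).card = b := by rw [card_rot hb, hA]
      have h1 := good_global hcard hgood
      rcases le_or_gt k.val p with h | h
      · have := h1 (p - k.val)
        rw [FF_rot hb, show k.val + (p - k.val) = p by omega] at this
        omega
      · have := h1 (p + (a+b) - k.val)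
        rw [FF_rot hb, show k.val + (p + (a+b) - k.val) = p + (a+b) by omega,
          FF_per A hA] at this
        omega
    · intro hmin' q hq
      rw [FF_rot hb]
      have := hmin' (k.val + q)
      omega
  refine ⟨⟨m, hmlt⟩, ?_, ?_⟩
  · exact (hkey _).mpr hglobal
  · intro k hk
    have hk2 := (hkey k).mp hk
    apply Fin.ext
    have h1 : FF a b A k.val = FF a b A m := le_antisymm (hk2 m) (hglobal k.val)
    rcases le_or_gt k.val m with h | h
    · exact FF_inj hab A h (by omega) h1
    · exact (FF_inj hab A (le_of_lt h) (by omega) h1.symm).symm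

lemma cycle_count (ha : 0 < a) (hb : 0 < b) (hab : Nat.Coprime a b) :
    (a + b) * ({A : Finset (Fin (a+b)) | A.card = b ∧ Good a b A}.ncard)
      = Nat.choose (a+b) b := by
  haveI : NeZero (a+b) := ⟨by omega⟩
  classical
  set S3 := {A : Finset (Fin (a+b)) | A.card = b ∧ Good a b A} with hS3
  have hcard_add : ∀ (A : Finset (Fin (a+b))) (k : Fin (a+b)),
      (A.image (· + k)).card = A.card := fun A k =>
    Finset.card_image_of_injective A (add_left_injective k)
  let Φ : ↥S3 × Fin (a+b) → {A : Finset (Fin (a+b)) // A.card = b} :=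
    fun gk => ⟨gk.1.val.image (· + gk.2), by rw [hcard_add]; exact gk.1.prop.1⟩
  have hbij : Function.Bijective Φ := by
    constructor
    · rintro ⟨⟨g, hg⟩, k⟩ ⟨⟨g', hg'⟩, k'⟩ h
      have himg : g.image (· + k) = g'.image (· + k') := congrArg Subtype.val h
      obtain ⟨hgcard, hggood⟩ := hg
      obtain ⟨hgcard', hggood'⟩ := hg'
      set A := g.image (· + k) with hAdef
      have hA : A.card = b := by rw [hAdef, hcard_add, hgcard]
      have hk : A.image (· - k) = g := by rw [hAdef, rot_inv hb]
      have hk' : A.image (· - k') = g' := by rw [himg, rot_inv hb]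
      have hgood1 : Good a b (A.image (· - k)) := by rw [hk]; exact hggood
      have hgood2 : Good a b (A.image (· - k')) := by rw [hk']; exact hggood'
      obtain ⟨k0, _, huniq⟩ := exists_good_rot hab hb A hA
      have e1 : k = k0 := huniq k hgood1
      have e2 : k' = k0 := huniq k' hgood2
      have ekk : k = k' := by rw [e1, e2]
      subst ekk
      have : g = g' := by rw [← hk, ← hk']
      simp only [Prod.mk.injEq, Subtype.mk.injEq]
      exact ⟨this, trivial⟩
    · rintro ⟨A, hA⟩
      obtain ⟨k, hk, _⟩ := exists_good_rot hab hb A hA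
      refine ⟨⟨⟨A.image (· - k), ⟨by rw [card_rot hb, hA], hk⟩⟩, k⟩, ?_⟩
      apply Subtype.ext
      show (A.image (· - k)).image (· + k) = A
      exact rot_inv' hb A k
  have hcount := Nat.card_congr (Equiv.ofBijective Φ hbij)
  rw [Nat.card_prod] at hcount
  rw [Nat.card_eq_fintype_card (α := Fin (a+b)), Fintype.card_fin] at hcount
  rw [Nat.card_eq_fintype_card (α := {A : Finset (Fin (a+b)) // A.card = b}),
    Fintype.card_finset_len, Fintype.card_fin] at hcount
  rw [← Nat.card_coe_set_eq] at *
  rw [Nat.mul_comm]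
  exact hcount

end Cycle
section Phi2

variable {a b : ℕ}

lemma fin_seg (P : Fin b → Prop) [DecidablePred P]
    (hdown : ∀ x y : Fin b, x ≤ y → P y → P x) (x : Fin b) :
    P x ↔ x.val < (Finset.univ.filter P).card := by
  set u := (Finset.univ.filter P).card with hu
  constructor
  · intro hPx
    have hsub : Finset.Iic x ⊆ Finset.univ.filter P := by
      intro y hy
      rw [Finset.mem_Iic] at hy
      exact Finset.mem_filter.mpr ⟨Finset.mem_univ _, hdown y x hy hPx⟩
    have := Finset.card_le_card hsub
    rw [Fin.card_Iic] at this
    omega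
  · intro hxu
    by_contra hPx
    have hsub : Finset.univ.filter P ⊆ Finset.Iio x := by
      intro y hy
      rw [Finset.mem_Iio]
      rcases lt_or_ge y x with h | h
      · exact h
      · exact absurd (hdown x y h (Finset.mem_filter.mp hy).2) hPx
    have := Finset.card_le_card hsub
    rw [Fin.card_Iio] at this
    omega

lemma ep_eq_card (A : Finset (Fin (a+b))) {p : ℕ} (hp : p ≤ a + b) :
    ep A p = (A.filter (fun i => i.val < p)).card := by
  classical
  unfold ep
  apply Finset.card_bij (fun q hq => (⟨q, by
    have := Finset.mem_range.mp (Finset.mem_filter.mp hq).1; omega⟩ : Fin (a+b)))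
  · intro q hq
    obtain ⟨hq1, hq2⟩ := Finset.mem_filter.mp hq
    have hqlt := Finset.mem_range.mp hq1
    exact Finset.mem_filter.mpr ⟨(wrd_lt (by omega)).mp hq2, hqlt⟩
  · intro q hq q' hq' he
    exact congrArg Fin.val he
  · intro i hi
    obtain ⟨hiA, hilt⟩ := Finset.mem_filter.mp hi
    refine ⟨i.val, Finset.mem_filter.mpr ⟨Finset.mem_range.mpr hilt,
      (wrd_lt i.isLt).mpr (by simpa using hiA)⟩, rfl⟩

/-- the position function of a monotone sequence -/
def pfun (a : ℕ) {b : ℕ} (H : Fin b → ℕ) (x : Fin b) : Fin (a+b) :=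
  ⟨(x.val + H x) % (a+b), Nat.mod_lt _ (lt_of_le_of_lt (Nat.zero_le x.val)
    (lt_of_lt_of_le x.isLt (Nat.le_add_left b a)))⟩

/-- the word associated to a monotone sequence -/
def phi2 (a : ℕ) {b : ℕ} (H : Fin b → ℕ) : Finset (Fin (a+b)) :=
  Finset.univ.image (pfun a H)

lemma MM_lt_a (ha : 0 < a) {H : Fin b → ℕ} (hH : H ∈ MM a b) (x : Fin b) : H x < a := by
  obtain ⟨hmono, hbd⟩ := hH
  by_contra hax
  have hb0 : 0 < b := lt_of_le_of_lt (Nat.zero_le _) x.isLt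
  have h1 : a * b ≤ H x * b := Nat.mul_le_mul (by omega) (le_refl b)
  have h2 : x.val * a ≤ (b-1) * a := Nat.mul_le_mul (by omega) (le_refl a)
  have hb1 : b - 1 + 1 = b := by omega
  have h3 : (b-1) * a + a = b * a := by
    calc (b-1) * a + a = ((b-1) + 1) * a := by ring
      _ = b * a := by rw [hb1]
  have h4 : a * b = b * a := Nat.mul_comm a b
  have h5 := hbd x
  omega

lemma pfun_val (ha : 0 < a) {H : Fin b → ℕ} (hH : H ∈ MM a b) (x : Fin b) :
    (pfun a H x).val = x.val + H x := by
  have h1 := MM_lt_a ha hH x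
  have h2 := x.isLt
  exact Nat.mod_eq_of_lt (by omega)

lemma pfun_strictMono (ha : 0 < a) {H : Fin b → ℕ} (hH : H ∈ MM a b) :
    StrictMono (pfun a H) := by
  intro x y hxy
  rw [Fin.lt_def, pfun_val ha hH, pfun_val ha hH]
  have := hH.1 x y (le_of_lt hxy)
  rw [Fin.lt_def] at hxy
  omega

lemma phi2_card (ha : 0 < a) {H : Fin b → ℕ} (hH : H ∈ MM a b) :
    (phi2 a H).card = b := by
  rw [phi2, Finset.card_image_of_injective _ (pfun_strictMono ha hH).injective]
  simp

lemma phi2_filter (ha : 0 < a) {H : Fin b → ℕ} (hH : H ∈ MM a b) (p : ℕ) :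
    (phi2 a H).filter (fun i => i.val < p)
      = (Finset.univ.filter (fun x : Fin b => x.val + H x < p)).image (pfun a H) := by
  ext i
  simp only [phi2, Finset.mem_filter, Finset.mem_image, Finset.mem_univ, true_and]
  constructor
  · rintro ⟨⟨x, rfl⟩, hlt⟩
    exact ⟨x, by rwa [pfun_val ha hH] at hlt, rfl⟩
  · rintro ⟨x, hx, rfl⟩
    exact ⟨⟨x, rfl⟩, by rwa [pfun_val ha hH]⟩

lemma phi2_ep (ha : 0 < a) {H : Fin b → ℕ} (hH : H ∈ MM a b) {p : ℕ} (hp : p ≤ a + b) :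
    ep (phi2 a H) p = (Finset.univ.filter (fun x : Fin b => x.val + H x < p)).card := by
  rw [ep_eq_card _ hp, phi2_filter ha hH,
    Finset.card_image_of_injective _ (pfun_strictMono ha hH).injective]

lemma phi2_good (ha : 0 < a) {H : Fin b → ℕ} (hH : H ∈ MM a b) :
    Good a b (phi2 a H) := by
  intro p hp
  rw [FF_eq, phi2_ep ha hH hp]
  set u := (Finset.univ.filter (fun x : Fin b => x.val + H x < p)).card with hu
  have hub : u ≤ b := le_trans (Finset.card_le_card (Finset.filter_subset _ _)) (by simp)
  rcases Nat.eq_or_lt_of_le hub with he | hlt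
  · -- u = b
    have hbp : b * p ≤ (a+b) * u := by
      have h1 : b * p ≤ b * (a+b) := Nat.mul_le_mul (le_refl b) hp
      have h2 : (a+b) * u = (a+b) * b := by rw [he]
      have h3 : b * (a+b) = (a+b) * b := Nat.mul_comm _ _
      omega
    have hz := (Nat.cast_le (α := ℤ)).mpr hbp
    push_cast at hz ⊢
    linarith
  · -- u < b : the element at position u is not in the filter
    have hdown : ∀ x y : Fin b, x ≤ y → (fun x : Fin b => x.val + H x < p) y
        → (fun x : Fin b => x.val + H x < p) x := by
      intro x y hxy hy
      have := hH.1 x y hxy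
      rw [Fin.le_def] at hxy
      omega
    have hnot : ¬ ((⟨u, hlt⟩ : Fin b).val + H ⟨u, hlt⟩ < p) := by
      intro hcon
      have := (fin_seg _ hdown ⟨u, hlt⟩).mp hcon
      rw [← hu] at this
      simp only at this
      omega
    have hple : p ≤ u + H ⟨u, hlt⟩ := by simpa using Nat.le_of_not_lt hnot
    have hbd := hH.2 ⟨u, hlt⟩
    simp only at hbd
    -- b * p ≤ (a+b) * u
    have hbp : b * p ≤ (a+b) * u := by
      have h1 : b * p ≤ b * (u + H ⟨u, hlt⟩) := Nat.mul_le_mul (le_refl b) hple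
      have h2 : b * (u + H ⟨u, hlt⟩) = b * u + b * H ⟨u, hlt⟩ := Nat.mul_add _ _ _
      have h3 : b * H ⟨u, hlt⟩ = H ⟨u, hlt⟩ * b := Nat.mul_comm _ _
      have h4 : u * a = a * u := Nat.mul_comm _ _
      have h5 : (a+b) * u = a * u + b * u := by ring
      omega
    have hz := (Nat.cast_le (α := ℤ)).mpr hbp
    push_cast at hz ⊢
    linarith

lemma phi2_injOn (ha : 0 < a) : Set.InjOn (phi2 a) (MM a b) := by
  intro H hH H' hH' he
  have hc : (phi2 a H).card = b := phi2_card ha hH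
  have hc' : (phi2 a H').card = b := phi2_card ha hH'
  have h1 : pfun a H = ⇑((phi2 a H).orderEmbOfFin hc) :=
    Finset.orderEmbOfFin_unique hc (fun x => Finset.mem_image_of_mem _ (Finset.mem_univ x))
      (pfun_strictMono ha hH)
  have h2 : pfun a H' = ⇑((phi2 a H).orderEmbOfFin hc) :=
    Finset.orderEmbOfFin_unique hc
      (fun x => he ▸ Finset.mem_image_of_mem _ (Finset.mem_univ x))
      (pfun_strictMono ha hH')
  funext x
  have hpp : pfun a H x = pfun a H' x := by rw [h1, h2]
  have hv := congrArg Fin.val hpp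
  rw [pfun_val ha hH, pfun_val ha hH'] at hv
  omega

/-- gap estimate for strict monotone maps out of Fin b into ℕ -/
lemma strictMono_gap {g : Fin b → ℕ} (hg : ∀ x y : Fin b, x < y → g x < g y) :
    ∀ (d : ℕ) (x y : Fin b), y.val = x.val + d → g x + d ≤ g y := by
  intro d
  induction d with
  | zero =>
    intro x y hxy
    have hxe : x = y := Fin.ext (by omega)
    rw [hxe]
    omega
  | succ n ih =>
    intro x y hxy
    have hyb := y.isLt
    have hy' : x.val + n < b := by omega
    have h1 := ih x ⟨x.val + n, hy'⟩ rfl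
    have h2 : g ⟨x.val + n, hy'⟩ < g y := hg _ _ (by rw [Fin.lt_def]; simp; omega)
    omega

lemma strictMono_le {g : Fin b → ℕ} (hg : ∀ x y : Fin b, x < y → g x < g y)
    (x : Fin b) : x.val ≤ g x := by
  have h0 : (0 : ℕ) < b := lt_of_le_of_lt (Nat.zero_le _) x.isLt
  have := strictMono_gap hg x.val ⟨0, h0⟩ x (by simp)
  omega

lemma phi2_image (ha : 0 < a) (hb : 0 < b) :
    phi2 a '' (MM a b) = {A : Finset (Fin (a+b)) | A.card = b ∧ Good a b A} := by
  apply Set.Subset.antisymm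
  · rintro A ⟨H, hH, rfl⟩
    exact ⟨phi2_card ha hH, phi2_good ha hH⟩
  · rintro A ⟨hcard, hgood⟩
    set f := A.orderEmbOfFin hcard with hf
    have hfsm : ∀ x y : Fin b, x < y → (f x).val < (f y).val := by
      intro x y hxy
      exact (A.orderEmbOfFin hcard).strictMono hxy
    set g : Fin b → ℕ := fun x => (f x).val with hg
    have hgsm : ∀ x y : Fin b, x < y → g x < g y := hfsm
    have hglb : ∀ x : Fin b, x.val ≤ g x := strictMono_le hgsm
    set H : Fin b → ℕ := fun x => g x - x.val with hH
    -- prefix count at g x is x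
    have hepg : ∀ x : Fin b, ep A (g x) = x.val := by
      intro x
      have hgx : g x ≤ a + b := le_of_lt (f x).isLt
      rw [ep_eq_card A hgx]
      have hfe : A.filter (fun i => i.val < g x)
          = (Finset.univ.filter (fun y : Fin b => y < x)).image f := by
        ext i
        simp only [Finset.mem_filter, Finset.mem_image, Finset.mem_univ, true_and]
        constructor
        · rintro ⟨hiA, hilt⟩
          have : i ∈ Set.range f := by
            rw [hf, Finset.range_orderEmbOfFin]
            exact hiA
          obtain ⟨y, rfl⟩ := this
          refine ⟨y, ?_, rfl⟩
          by_contra hyx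
          have hxy : x ≤ y := le_of_not_gt hyx
          have hgrfl : g x = (f x).val := rfl
          rcases eq_or_lt_of_le hxy with hxe | hxlt
          · rw [← hxe] at hilt
            have : (f x).val < g x := hilt
            omega
          · have h9 := hfsm x y hxlt
            have : (f y).val < g x := hilt
            omega
        · rintro ⟨y, hyx, rfl⟩
          exact ⟨Finset.orderEmbOfFin_mem A hcard y, hfsm y x hyx⟩
      rw [hfe, Finset.card_image_of_injective _ (A.orderEmbOfFin hcard).injective]
      have : Finset.univ.filter (fun y : Fin b => y < x) = Finset.Iio x := by
        ext y; simp
      rw [this, Fin.card_Iio]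
    -- H is in MM
    have hHM : H ∈ MM a b := by
      constructor
      · intro x y hxy
        rcases eq_or_lt_of_le hxy with he | hlt
        · rw [he]
        · have h1 := strictMono_gap hgsm (y.val - x.val) x y (by
            rw [Fin.lt_def] at hlt; omega)
          have h2 := hglb x
          rw [Fin.lt_def] at hlt
          show g x - x.val ≤ g y - y.val
          omega
      · intro x
        have hgx : g x ≤ a + b := le_of_lt (f x).isLt
        have h0 := hgood (g x) hgx
        rw [FF_eq, hepg x] at h0
        have hbg : b * g x ≤ (a+b) * x.val := by
          have : ((b : ℤ)) * g x ≤ ((a+b : ℕ) : ℤ) * x.val := by push_cast; linarith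
          exact_mod_cast this
        have h2 := hglb x
        have h3 : b * g x = b * x.val + b * (g x - x.val) := by
          rw [← Nat.mul_add]
          congr 1
          omega
        have h4 : (a+b) * x.val = a * x.val + b * x.val := by ring
        have h5 : b * (g x - x.val) = (g x - x.val) * b := Nat.mul_comm _ _
        have h6 : a * x.val = x.val * a := Nat.mul_comm _ _
        show (g x - x.val) * b ≤ x.val * a
        omega
    refine ⟨H, hHM, ?_⟩
    -- phi2 a H = A
    have hpf : ∀ x : Fin b, pfun a H x = f x := by
      intro x
      apply Fin.ext
      rw [pfun_val ha hHM]
      show x.val + (g x - x.val) = (f x).val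
      have hgrfl : g x = (f x).val := rfl
      have := hglb x
      omega
    rw [phi2]
    have himg : Finset.univ.image (pfun a H) = Finset.univ.image f := by
      apply Finset.image_congr
      intro x _
      exact hpf x
    rw [himg]
    apply Finset.eq_of_subset_of_card_le
    · intro i hi
      obtain ⟨x, _, rfl⟩ := Finset.mem_image.mp hi
      exact Finset.orderEmbOfFin_mem A hcard x
    · rw [Finset.card_image_of_injective _ (A.orderEmbOfFin hcard).injective]
      simp [hcard]

end Phi2
end AB

open AB in
theorem stmt_0 (a b : ℕ) (ha : 0 < a) (hb : 0 < b) (hab : Nat.Coprime a b) :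
    (a + b) * {d : YoungDiagram | d.IsCore a ∧ d.IsCore b}.ncard
      = Nat.choose (a + b) b := by
  classical
  -- Step 1 : beta-sets
  have h1 : beta '' {d : YoungDiagram | d.IsCore a ∧ d.IsCore b} = {S | GB a b S} := by
    apply Set.Subset.antisymm
    · rintro S ⟨d, ⟨hca, hcb⟩, rfl⟩
      refine ⟨?_, (isCore_iff_closed d ha).mp hca, (isCore_iff_closed d hb).mp hcb⟩
      intro h0
      obtain ⟨i, hi, hsi⟩ := mem_beta.mp h0
      have := sfun_eq d hi
      have := rowLen_pos d hi
      omega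
    · rintro S ⟨h0, hca, hcb⟩
      refine ⟨dS h0, ⟨?_, ?_⟩, beta_dS h0⟩
      · exact (isCore_iff_closed _ ha).mpr (by rw [beta_dS h0]; exact hca)
      · exact (isCore_iff_closed _ hb).mpr (by rw [beta_dS h0]; exact hcb)
  have e1 : {d : YoungDiagram | d.IsCore a ∧ d.IsCore b}.ncard = {S | GB a b S}.ncard := by
    rw [← h1, Set.ncard_image_of_injective _ beta_injective]
  -- Step 2 : monotone functions
  have e2 : {S | GB a b S}.ncard = (MM a b).ncard := by
    rw [← phi1_image ha hb hab, Set.ncard_image_of_injOn (phi1_injOn hb hab)]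
  -- Step 3 : good words
  have e3 : (MM a b).ncard
      = {A : Finset (Fin (a+b)) | A.card = b ∧ Good a b A}.ncard := by
    rw [← phi2_image ha hb, Set.ncard_image_of_injOn ((phi2_injOn ha).mono (le_refl _))]
  rw [e1, e2, e3]
  exact cycle_count ha hb hab
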